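/- Let λ₁, λ₂ > 1 and φ ∈ ℝ. Define β = (λ₁^{-2}+λ₂^{-2})/(1+λ₁^{-2}λ₂^{-2}) and m(λ₁,λ₂,φ) = (λ₁λ₂ + λ₁^{-1}λ₂^{-1})·√(cos²φ + β² sin²φ). Then m(λ₁,λ₂,φ) ≥ λ₂/λ₁ + λ₁/λ₂, uniformly in φ. -/

import Mathlib

/-- Lower bound `m(λ₁,λ₂,φ) ≥ λ₂/λ₁ + λ₁/λ₂`, uniform in `φ`, where
`m = (λ₁λ₂ + λ₁⁻¹λ₂⁻¹)√(cos²φ + β² sin²φ)` and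
`β = (λ₁⁻² + λ₂⁻²)/(1 + λ₁⁻²λ₂⁻²)`. -/
theorem stmt9 (lam₁ lam₂ φ : ℝ) (h₁ : 1 < lam₁) (h₂ : 1 < lam₂) :
    lam₂ / lam₁ + lam₁ / lam₂ ≤
      (lam₁ * lam₂ + lam₁⁻¹ * lam₂⁻¹) *
        Real.sqrt (Real.cos φ ^ 2 +
          ((lam₁⁻¹ ^ 2 + lam₂⁻¹ ^ 2) / (1 + lam₁⁻¹ ^ 2 * lam₂⁻¹ ^ 2)) ^ 2 *
            Real.sin φ ^ 2) := by
  have hp1 : (0:ℝ) < lam₁ := by linarith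
  have hp2 : (0:ℝ) < lam₂ := by linarith
  set β : ℝ := (lam₁⁻¹ ^ 2 + lam₂⁻¹ ^ 2) / (1 + lam₁⁻¹ ^ 2 * lam₂⁻¹ ^ 2) with hβ
  have hden : (0:ℝ) < 1 + lam₁⁻¹ ^ 2 * lam₂⁻¹ ^ 2 := by positivity
  have hβ0 : 0 ≤ β := by positivity
  have hβ1 : β ≤ 1 := by
    rw [hβ, div_le_one hden]
    have i1 : lam₁⁻¹ ^ 2 ≤ 1 := by
      rw [inv_eq_one_div, div_pow, div_le_one (by positivity)]; nlinarith
    have i2 : lam₂⁻¹ ^ 2 ≤ 1 := by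
      rw [inv_eq_one_div, div_pow, div_le_one (by positivity)]; nlinarith
    nlinarith [mul_nonneg (sub_nonneg.mpr i1) (sub_nonneg.mpr i2)]
  have hsq : β ≤ Real.sqrt (Real.cos φ ^ 2 + β ^ 2 * Real.sin φ ^ 2) := by
    rw [Real.le_sqrt hβ0 (by positivity)]
    have hpy : Real.sin φ ^ 2 + Real.cos φ ^ 2 = 1 := Real.sin_sq_add_cos_sq φ
    nlinarith [mul_nonneg (sq_nonneg (Real.cos φ)) (show (0:ℝ) ≤ 1 - β ^ 2 by nlinarith)]
  have hA : 0 ≤ lam₁ * lam₂ + lam₁⁻¹ * lam₂⁻¹ := by positivity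
  have key : lam₂ / lam₁ + lam₁ / lam₂ = (lam₁ * lam₂ + lam₁⁻¹ * lam₂⁻¹) * β := by
    rw [hβ]
    field_simp
  calc lam₂ / lam₁ + lam₁ / lam₂ = (lam₁ * lam₂ + lam₁⁻¹ * lam₂⁻¹) * β := key
    _ ≤ _ := by exact mul_le_mul_of_nonneg_left hsq hA
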